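/- For all nonnegative integers m and n, the probabilistic bivariate r-Bell polynomials satisfy the recurrence φ_{m+n,r}^Y(x,y) = Σ_{i=0}^{n} Σ_{k=0}^{m} C(n,i) · φ_{i,r}^Y(x−k, y) · ((x)_k y^k / k!) · Σ_{j=k}^{m} Σ_{l_1+⋯+l_k=j, l_i≥1} C(m,j) · (j!/(l_1!⋯l_k!)) · r^{m−j} · E[S_k^{n−i} · ∏_{i'=1}^{k} Y_{i'}^{l_{i'}}], where the innermost sum is over all k-tuples (l_1,…,l_k) of positive integers with l_1+⋯+l_k = j. -/

import Mathlib

open MeasureTheory ProbabilityTheory Finset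

noncomputable section

variable {Ω : Type*} [MeasureSpace Ω]

/-- The falling factorial `(x)_k = x (x-1) ⋯ (x-k+1)`. -/
def fallFac (x : ℝ) (k : ℕ) : ℝ := ∏ i ∈ Finset.range k, (x - (i : ℝ))

/-- Partial sums `S_k = Y_1 + ⋯ + Y_k` (with `S_0 = 0`). -/
def S (Y : ℕ → Ω → ℝ) (k : ℕ) (ω : Ω) : ℝ := ∑ i ∈ Finset.range k, Y i ω

/-- The probabilistic r-Stirling numbers of the second kind associated with `Y`:
`{n+r brace k+r}_{r,Y} = (1/k!) ∑_{j=0}^{k} C(k,j) (−1)^{k−j} E[(S_j + r)^n]`. -/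
def probRStirling (Y : ℕ → Ω → ℝ) (r n k : ℕ) : ℝ :=
  ((k.factorial : ℝ))⁻¹ *
    ∑ j ∈ Finset.range (k + 1), (k.choose j : ℝ) * (-1) ^ (k - j) *
      ∫ ω, (S Y j ω + (r : ℝ)) ^ n

/-- The probabilistic bivariate r-Bell polynomials associated with `Y`:
`φ_{n,r}^Y(x,y) = ∑_{k=0}^{n} {n+r brace k+r}_{r,Y} (x)_k y^k`. -/
def phiRBiv (Y : ℕ → Ω → ℝ) (r n : ℕ) (x y : ℝ) : ℝ :=
  ∑ k ∈ Finset.range (n + 1), probRStirling Y r n k * fallFac x k * y ^ k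

/-- k-tuples of positive integers summing to `j`. -/
def posTuples (k j : ℕ) : Finset (Fin k → ℕ) :=
  (Finset.Nat.antidiagonalTuple k j).filter fun l => ∀ i, 0 < l i

/-! ### Combinatorial helpers -/

section Comb

lemma posTuples_eq_empty {k j : ℕ} (h : j < k) : posTuples k j = ∅ := by
  ext l
  simp only [posTuples, Finset.mem_filter, Finset.Nat.mem_antidiagonalTuple,
    Finset.notMem_empty, iff_false, not_and]
  intro hsum hpos
  have : k ≤ ∑ i : Fin k, l i := by
    calc k = ∑ _i : Fin k, 1 := by simp
    _ ≤ ∑ i : Fin k, l i := Finset.sum_le_sum fun i _ => hpos i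
  omega

lemma sum_posTuples_succ {k q : ℕ} (f : (Fin (k+1) → ℕ) → ℝ) :
    ∑ l ∈ posTuples (k+1) q, f l
      = ∑ e ∈ Finset.Icc 1 q, ∑ l ∈ posTuples k (q - e), f (Fin.snoc l e) := by
  rw [Finset.sum_sigma']
  refine Finset.sum_nbij' (i := fun l => ⟨l (Fin.last k), fun i => l i.castSucc⟩)
    (j := fun p => Fin.snoc p.2 p.1) ?_ ?_ ?_ ?_ ?_
  · intro l hl
    simp only [posTuples, Finset.mem_filter, Finset.Nat.mem_antidiagonalTuple] at hl
    obtain ⟨hsum, hpos⟩ := hl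
    rw [Fin.sum_univ_castSucc] at hsum
    simp only [Finset.mem_sigma, Finset.mem_Icc, posTuples, Finset.mem_filter,
      Finset.Nat.mem_antidiagonalTuple]
    refine ⟨⟨hpos _, by omega⟩, by omega, fun i => hpos _⟩
  · intro p hp
    simp only [Finset.mem_sigma, Finset.mem_Icc, posTuples, Finset.mem_filter,
      Finset.Nat.mem_antidiagonalTuple] at hp
    obtain ⟨⟨h1, h2⟩, hsum, hpos⟩ := hp
    simp only [posTuples, Finset.mem_filter, Finset.Nat.mem_antidiagonalTuple]
    constructor
    · rw [Fin.sum_univ_castSucc]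
      simp only [Fin.snoc_castSucc, Fin.snoc_last]
      omega
    · intro i
      refine Fin.lastCases ?_ ?_ i
      · simpa using (show 0 < p.1 from h1)
      · intro j; simpa using hpos j
  · intro l hl
    exact funext fun i => Fin.lastCases (by simp) (fun j => by simp) i
  · intro p hp
    simp
  · intro l hl
    have h2 : (Fin.snoc (fun i => l i.castSucc) (l (Fin.last k)) : Fin (k+1) → ℕ) = l :=
      funext fun i => Fin.lastCases (by simp) (fun j => by simp) i
    rw [show ((fun l : Fin (k+1) → ℕ => (⟨l (Fin.last k), fun i => l i.castSucc⟩ :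
      Σ _e : ℕ, Fin k → ℕ)) l).snd = fun i => l i.castSucc from rfl]
    rw [h2]

lemma multinomial_snoc {k q e : ℕ} (he : 1 ≤ e) (heq : e ≤ q) {l : Fin k → ℕ}
    (hl : l ∈ posTuples k (q - e)) :
    Nat.multinomial Finset.univ (Fin.snoc l e : Fin (k+1) → ℕ)
      = q.choose e * Nat.multinomial Finset.univ l := by
  have hsum : ∑ i : Fin k, l i = q - e := by
    simpa [posTuples, Finset.Nat.mem_antidiagonalTuple] using
      (Finset.mem_filter.mp hl).1
  have hsum' : ∑ i : Fin (k+1), (Fin.snoc l e : Fin (k+1) → ℕ) i = q := by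
    rw [Fin.sum_univ_castSucc]
    simp only [Fin.snoc_castSucc, Fin.snoc_last]
    omega
  have spec1 := Nat.multinomial_spec (Finset.univ : Finset (Fin (k+1)))
      (Fin.snoc l e : Fin (k+1) → ℕ)
  have spec2 := Nat.multinomial_spec (Finset.univ : Finset (Fin k)) l
  rw [hsum'] at spec1
  rw [hsum] at spec2
  have hprod : ∏ i : Fin (k+1), ((Fin.snoc l e : Fin (k+1) → ℕ) i).factorial
      = (∏ i : Fin k, (l i).factorial) * e.factorial := by
    rw [Fin.prod_univ_castSucc]
    simp
  rw [hprod] at spec1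
  -- q! = choose q e * e! * (q-e)!
  have hch : q.choose e * e.factorial * (q - e).factorial = q.factorial :=
    Nat.choose_mul_factorial_mul_factorial heq
  have hpos : 0 < (∏ i : Fin k, (l i).factorial) * e.factorial :=
    Nat.mul_pos (Finset.prod_pos fun i _ => Nat.factorial_pos _) e.factorial_pos
  refine Nat.eq_of_mul_eq_mul_left hpos ?_
  calc ((∏ i : Fin k, (l i).factorial) * e.factorial) *
        Nat.multinomial Finset.univ (Fin.snoc l e : Fin (k+1) → ℕ)
      = q.factorial := spec1
    _ = q.choose e * e.factorial * ((q-e).factorial) := hch.symm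
    _ = q.choose e * e.factorial * ((∏ i : Fin k, (l i).factorial) *
          Nat.multinomial Finset.univ l) := by rw [spec2]
    _ = ((∏ i : Fin k, (l i).factorial) * e.factorial) *
        (q.choose e * Nat.multinomial Finset.univ l) := by ring

/-- triangle swap -/
lemma sum_triangle (N : ℕ) (f : ℕ → ℕ → ℝ) :
    ∑ K ∈ Finset.range N, ∑ k ∈ Finset.range (K+1), f k K
      = ∑ k ∈ Finset.range N, ∑ a ∈ Finset.range (N - k), f k (k + a) := by
  rw [Finset.sum_sigma', Finset.sum_sigma']
  refine Finset.sum_nbij' (i := fun p => ⟨p.2, p.1 - p.2⟩) (j := fun p => ⟨p.1 + p.2, p.1⟩)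
    ?_ ?_ ?_ ?_ ?_
  · intro p hp
    simp only [Finset.mem_sigma, Finset.mem_range] at hp ⊢
    omega
  · intro p hp
    simp only [Finset.mem_sigma, Finset.mem_range] at hp ⊢
    omega
  · intro p hp
    simp only [Finset.mem_sigma, Finset.mem_range] at hp
    dsimp only
    simp only [Sigma.ext_iff]
    refine ⟨by omega, HEq.rfl⟩
  · intro p hp
    simp only [Finset.mem_sigma, Finset.mem_range] at hp
    dsimp only
    simp only [Sigma.ext_iff]
    refine ⟨trivial, ?_⟩
    have h2 : p.1 + p.2 - p.1 = p.2 := by omega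
    rw [h2]
  · intro p hp
    simp only [Finset.mem_sigma, Finset.mem_range] at hp
    dsimp only
    have h2 : p.2 + (p.1 - p.2) = p.1 := by omega
    rw [h2]

lemma fallFac_add (x : ℝ) (k a : ℕ) :
    fallFac x (k + a) = fallFac x k * fallFac (x - k) a := by
  induction a with
  | zero => simp [fallFac]
  | succ a ih =>
    rw [show k + (a+1) = (k+a)+1 from rfl]
    simp only [fallFac, Finset.prod_range_succ] at *
    rw [ih]
    push_cast
    ring

lemma cast_choose_eq (a b : ℕ) (h : b ≤ a) :
    (a.choose b : ℝ) = a.factorial / (b.factorial * (a - b).factorial) := by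
  rw [eq_div_iff (by positivity)]
  exact_mod_cast congrArg (Nat.cast (R := ℝ)) (by rw [← Nat.choose_mul_factorial_mul_factorial h]; ring)

end Comb

/-! ### Analytic layer -/

section Analytic

variable [IsProbabilityMeasure (volume : Measure Ω)]
variable (Y : ℕ → Ω → ℝ) (Y₀ : Ω → ℝ) (r : ℕ)

/-- moments of `Y₀` -/
def mu (p : ℕ) : ℝ := ∫ ω, (Y₀ ω) ^ p

/-- moments of shifted partial sums -/
def Mm (d j : ℕ) : ℝ := ∫ ω, (S Y j ω + (r : ℝ)) ^ d

/-- mixed moments -/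
def EE (k p : ℕ) (l : Fin k → ℕ) : ℝ :=
  ∫ ω, (S Y k ω) ^ p * ∏ i : Fin k, (Y i ω) ^ (l i)

/-- weighted positive-tuple mixed moments -/
def cc (k p q : ℕ) : ℝ :=
  ∑ l ∈ posTuples k q, (Nat.multinomial Finset.univ l : ℝ) * EE Y k p l

variable (hMeas : ∀ i, Measurable (Y i))
  (hIndep : iIndepFun Y volume)
  (hId : ∀ i, IdentDistrib (Y i) Y₀ volume volume)
  (hInt : ∀ m : ℕ, Integrable fun ω => (Y₀ ω) ^ m)

lemma S_eq_fin (k : ℕ) (ω : Ω) : S Y k ω = ∑ i : Fin k, Y (i : ℕ) ω := by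
  rw [S, ← Fin.sum_univ_eq_sum_range]

include hId in
lemma identY (i d : ℕ) :
    IdentDistrib (fun ω => (Y i ω) ^ d) (fun ω => (Y₀ ω) ^ d) volume volume :=
  (hId i).comp (measurable_id.pow_const d)

include hId hInt in
lemma int_pow (i d : ℕ) : Integrable (fun ω => (Y i ω) ^ d) :=
  ((identY Y Y₀ hId i d).integrable_iff).mpr (hInt d)

include hId in
lemma integral_Ypow (i d : ℕ) : ∫ ω, (Y i ω) ^ d = mu Y₀ d :=
  (identY Y Y₀ hId i d).integral_eq

include hMeas hIndep in
lemma indep_pre (k : ℕ) {g : (Fin k → ℝ) → ℝ} (hg : Measurable g) (e : ℕ) :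
    IndepFun (fun ω => g fun i => Y (i : ℕ) ω) (fun ω => (Y k ω) ^ e) volume := by
  have hd : Disjoint (Finset.range k) ({k} : Finset ℕ) := by simp
  have H := (hIndep.indepFun_finset (Finset.range k) {k} hd hMeas).comp
      (φ := fun v : ((Finset.range k : Finset ℕ) : Type) → ℝ =>
        g fun i : Fin k => v ⟨(i : ℕ), Finset.mem_range.mpr i.isLt⟩)
      (ψ := fun v : (({k} : Finset ℕ) : Type) → ℝ =>
        (v ⟨k, Finset.mem_singleton_self k⟩) ^ e)
      (hg.comp (measurable_pi_lambda _ fun i => measurable_pi_apply _))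
      (by fun_prop)
  exact H

include hMeas hIndep in
lemma indep_SR (j d e : ℕ) :
    IndepFun (fun ω => (S Y j ω + (r : ℝ)) ^ d) (fun ω => (Y j ω) ^ e) volume := by
  have hg : Measurable fun v : Fin j → ℝ => ((∑ i, v i) + (r : ℝ)) ^ d := by
    fun_prop
  have H := indep_pre Y hMeas hIndep j hg e
  have : (fun ω => (fun v : Fin j → ℝ => ((∑ i, v i) + (r : ℝ)) ^ d) fun i => Y (i : ℕ) ω)
      = fun ω => (S Y j ω + (r : ℝ)) ^ d := by
    funext ω; rw [S_eq_fin]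
  rwa [this] at H

include hMeas hIndep in
lemma indep_SE (k p : ℕ) (l : Fin k → ℕ) (e : ℕ) :
    IndepFun (fun ω => (S Y k ω) ^ p * ∏ i : Fin k, (Y i ω) ^ (l i))
      (fun ω => (Y k ω) ^ e) volume := by
  have hg : Measurable fun v : Fin k → ℝ => (∑ i, v i) ^ p * ∏ i : Fin k, (v i) ^ (l i) := by
    fun_prop
  have H := indep_pre Y hMeas hIndep k hg e
  have : (fun ω => (fun v : Fin k → ℝ => (∑ i, v i) ^ p * ∏ i : Fin k, (v i) ^ (l i))
        fun i => Y (i : ℕ) ω)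
      = fun ω => (S Y k ω) ^ p * ∏ i : Fin k, (Y i ω) ^ (l i) := by
    funext ω; rw [S_eq_fin]
  rwa [this] at H

include hMeas hIndep hId hInt in
lemma integrable_SR (j : ℕ) : ∀ e, Integrable (fun ω => (S Y j ω + (r : ℝ)) ^ e) := by
  induction j with
  | zero =>
    intro e
    have : (fun ω : Ω => (S Y 0 ω + (r : ℝ)) ^ e) = fun _ : Ω => ((r : ℝ)) ^ e := by
      funext ω; simp [S]
    rw [this]; exact integrable_const _
  | succ j ih =>
    intro e
    have hpt : (fun ω => (S Y (j+1) ω + (r : ℝ)) ^ e)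
        = fun ω => ∑ d ∈ Finset.range (e+1),
            ((S Y j ω + (r : ℝ)) ^ d * (Y j ω) ^ (e - d) * ((e.choose d : ℕ) : ℝ)) := by
      funext ω
      rw [show S Y (j+1) ω = S Y j ω + Y j ω from Finset.sum_range_succ _ _,
        show S Y j ω + Y j ω + (r : ℝ) = (S Y j ω + (r : ℝ)) + Y j ω by ring, add_pow]
    rw [hpt]
    apply integrable_finset_sum
    intro d _
    exact (((indep_SR Y r hMeas hIndep j d (e - d)).integrable_mul (ih d)
      (int_pow Y Y₀ hId hInt j (e - d))).mul_const _)

include hMeas hIndep hId hInt in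
lemma integrable_EE (k : ℕ) :
    ∀ p (l : Fin k → ℕ),
      Integrable (fun ω => (S Y k ω) ^ p * ∏ i : Fin k, (Y i ω) ^ (l i)) := by
  induction k with
  | zero =>
    intro p l
    have : (fun ω : Ω => (S Y 0 ω) ^ p * ∏ i : Fin 0, (Y i ω) ^ (l i))
        = fun _ : Ω => (0 : ℝ) ^ p * 1 := by
      funext ω; simp [S]
    rw [this]; exact integrable_const _
  | succ k ih =>
    intro p l
    have hpt : (fun ω => (S Y (k+1) ω) ^ p * ∏ i : Fin (k+1), (Y i ω) ^ (l i))
        = fun ω => ∑ d ∈ Finset.range (p+1),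
            (((S Y k ω) ^ d * ∏ i : Fin k, (Y i ω) ^ (l i.castSucc)) *
              (Y k ω) ^ ((p - d) + l (Fin.last k)) * ((p.choose d : ℕ) : ℝ)) := by
      funext ω
      rw [show S Y (k+1) ω = S Y k ω + Y k ω from Finset.sum_range_succ _ _, add_pow,
        Fin.prod_univ_castSucc]
      rw [Finset.sum_mul]
      refine Finset.sum_congr rfl fun d _ => ?_
      simp only [Fin.coe_castSucc, Fin.val_last, pow_add]
      ring
    rw [hpt]
    apply integrable_finset_sum
    intro d _
    exact (((indep_SE Y hMeas hIndep k d (fun i => l i.castSucc)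
      ((p - d) + l (Fin.last k))).integrable_mul (ih d _)
      (int_pow Y Y₀ hId hInt k _)).mul_const _)

include hMeas hIndep hId hInt in
lemma split_SR (j d e : ℕ) :
    ∫ ω, (S Y j ω + (r : ℝ)) ^ d * (Y j ω) ^ e = Mm Y r d j * mu Y₀ e := by
  have h := (indep_SR Y r hMeas hIndep j d e).integral_mul_eq_mul_integral
      (integrable_SR Y Y₀ r hMeas hIndep hId hInt j d).aestronglyMeasurable
      (int_pow Y Y₀ hId hInt j e).aestronglyMeasurable
  rw [show (∫ ω, (S Y j ω + (r : ℝ)) ^ d * (Y j ω) ^ e)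
      = integral ℙ ((fun ω => (S Y j ω + (r : ℝ)) ^ d) * fun ω => (Y j ω) ^ e) from rfl, h,
    integral_Ypow Y Y₀ hId j e]
  rfl

include hMeas hIndep hId hInt in
lemma split_SE (k p : ℕ) (l : Fin k → ℕ) (e : ℕ) :
    ∫ ω, ((S Y k ω) ^ p * ∏ i : Fin k, (Y i ω) ^ (l i)) * (Y k ω) ^ e
      = EE Y k p l * mu Y₀ e := by
  have h := (indep_SE Y hMeas hIndep k p l e).integral_mul_eq_mul_integral
      (integrable_EE Y Y₀ hMeas hIndep hId hInt k p l).aestronglyMeasurable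
      (int_pow Y Y₀ hId hInt k e).aestronglyMeasurable
  rw [show (∫ ω, ((S Y k ω) ^ p * ∏ i : Fin k, (Y i ω) ^ (l i)) * (Y k ω) ^ e)
      = integral ℙ ((fun ω => (S Y k ω) ^ p * ∏ i : Fin k, (Y i ω) ^ (l i)) *
        fun ω => (Y k ω) ^ e) from rfl, h,
    integral_Ypow Y Y₀ hId k e]
  rfl

lemma Mm_zero (d : ℕ) : Mm Y r d 0 = (r : ℝ) ^ d := by
  have : (fun ω : Ω => (S Y 0 ω + (r : ℝ)) ^ d) = fun _ : Ω => ((r : ℝ)) ^ d := by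
    funext ω; simp [S]
  rw [Mm, this, integral_const]
  simp

include hMeas hIndep hId hInt in
lemma Mm_succ (j p q : ℕ) :
    Mm Y r (p + q) (j + 1)
      = ∑ a ∈ Finset.range (p+1), ∑ b ∈ Finset.range (q+1),
          ((p.choose a : ℕ) : ℝ) * ((q.choose b : ℕ) : ℝ) * Mm Y r (a + b) j *
            mu Y₀ ((p - a) + (q - b)) := by
  have hpt : (fun ω => (S Y (j+1) ω + (r : ℝ)) ^ (p + q))
      = fun ω => ∑ a ∈ Finset.range (p+1), ∑ b ∈ Finset.range (q+1),
          ((S Y j ω + (r : ℝ)) ^ (a + b) * (Y j ω) ^ ((p - a) + (q - b))) *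
            (((p.choose a : ℕ) : ℝ) * ((q.choose b : ℕ) : ℝ)) := by
    funext ω
    rw [show S Y (j+1) ω = S Y j ω + Y j ω from Finset.sum_range_succ _ _,
      show S Y j ω + Y j ω + (r : ℝ) = (S Y j ω + (r : ℝ)) + Y j ω by ring,
      pow_add, add_pow, add_pow, Finset.sum_mul_sum]
    refine Finset.sum_congr rfl fun a _ => Finset.sum_congr rfl fun b _ => ?_
    rw [pow_add, pow_add]
    ring
  rw [Mm, hpt]
  have hint1 : ∀ a ∈ Finset.range (p+1), ∀ b ∈ Finset.range (q+1),
      Integrable (fun ω => ((S Y j ω + (r : ℝ)) ^ (a + b) * (Y j ω) ^ ((p - a) + (q - b))) *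
        (((p.choose a : ℕ) : ℝ) * ((q.choose b : ℕ) : ℝ))) := fun a _ b _ => by
    exact ((indep_SR Y r hMeas hIndep j (a+b) ((p-a)+(q-b))).integrable_mul
      (integrable_SR Y Y₀ r hMeas hIndep hId hInt j (a+b))
      (int_pow Y Y₀ hId hInt j ((p-a)+(q-b)))).mul_const _
  rw [integral_finset_sum _ (fun a ha => integrable_finset_sum _ (fun b hb => hint1 a ha b hb))]
  refine Finset.sum_congr rfl fun a ha => ?_
  rw [integral_finset_sum _ (fun b hb => hint1 a ha b hb)]
  refine Finset.sum_congr rfl fun b _ => ?_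
  rw [integral_mul_const]
  have h2 : ∫ ω, (S Y j ω + (r : ℝ)) ^ (a+b) * (Y j ω) ^ ((p-a)+(q-b))
      = Mm Y r (a+b) j * mu Y₀ ((p-a)+(q-b)) :=
    split_SR Y Y₀ r hMeas hIndep hId hInt j (a+b) ((p-a)+(q-b))
  rw [h2]
  ring

lemma EE_zero (p : ℕ) (l : Fin 0 → ℕ) : EE Y 0 p l = if p = 0 then 1 else 0 := by
  have : (fun ω : Ω => (S Y 0 ω) ^ p * ∏ i : Fin 0, (Y i ω) ^ (l i))
      = fun _ : Ω => (0 : ℝ) ^ p := by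
    funext ω; simp [S]
  rw [EE, this, integral_const]
  simp [zero_pow_eq]

include hMeas hIndep hId hInt in
lemma EE_snoc (k p e : ℕ) (l : Fin k → ℕ) :
    EE Y (k+1) p (Fin.snoc l e)
      = ∑ d ∈ Finset.range (p+1),
          ((p.choose d : ℕ) : ℝ) * EE Y k d l * mu Y₀ ((p - d) + e) := by
  have hpt : (fun ω => (S Y (k+1) ω) ^ p *
        ∏ i : Fin (k+1), (Y i ω) ^ ((Fin.snoc l e : Fin (k+1) → ℕ) i))
      = fun ω => ∑ d ∈ Finset.range (p+1),
          (((S Y k ω) ^ d * ∏ i : Fin k, (Y i ω) ^ (l i)) *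
            (Y k ω) ^ ((p - d) + e)) * ((p.choose d : ℕ) : ℝ) := by
    funext ω
    rw [show S Y (k+1) ω = S Y k ω + Y k ω from Finset.sum_range_succ _ _, add_pow,
      Fin.prod_univ_castSucc]
    simp only [Fin.snoc_castSucc, Fin.snoc_last, Fin.coe_castSucc, Fin.val_last]
    rw [Finset.sum_mul]
    refine Finset.sum_congr rfl fun d _ => ?_
    rw [pow_add]
    ring
  rw [EE, hpt]
  have hint1 : ∀ d ∈ Finset.range (p+1),
      Integrable (fun ω => (((S Y k ω) ^ d * ∏ i : Fin k, (Y i ω) ^ (l i)) *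
        (Y k ω) ^ ((p - d) + e)) * ((p.choose d : ℕ) : ℝ)) := fun d _ => by
    exact ((indep_SE Y hMeas hIndep k d l ((p-d)+e)).integrable_mul
      (integrable_EE Y Y₀ hMeas hIndep hId hInt k d l)
      (int_pow Y Y₀ hId hInt k ((p-d)+e))).mul_const _
  rw [integral_finset_sum _ hint1]
  refine Finset.sum_congr rfl fun d _ => ?_
  rw [integral_mul_const, split_SE Y Y₀ hMeas hIndep hId hInt k d l ((p-d)+e)]
  ring

include hMeas hIndep hId hInt in
lemma cc_succ (k p q : ℕ) :
    cc Y (k+1) p q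
      = ∑ e ∈ Finset.Icc 1 q, ∑ d ∈ Finset.range (p+1),
          ((q.choose e : ℕ) : ℝ) * ((p.choose d : ℕ) : ℝ) * cc Y k d (q - e) *
            mu Y₀ ((p - d) + e) := by
  rw [cc, sum_posTuples_succ]
  refine Finset.sum_congr rfl fun e he => ?_
  rw [Finset.mem_Icc] at he
  calc ∑ l ∈ posTuples k (q - e),
        ((Nat.multinomial Finset.univ (Fin.snoc l e : Fin (k+1) → ℕ) : ℕ) : ℝ) *
          EE Y (k+1) p (Fin.snoc l e)
      = ∑ l ∈ posTuples k (q - e), ∑ d ∈ Finset.range (p+1),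
          ((q.choose e : ℕ) : ℝ) * ((p.choose d : ℕ) : ℝ) *
            (((Nat.multinomial Finset.univ l : ℕ) : ℝ) * EE Y k d l) *
              mu Y₀ ((p - d) + e) := by
        refine Finset.sum_congr rfl fun l hl => ?_
        rw [multinomial_snoc he.1 he.2 hl, EE_snoc Y Y₀ hMeas hIndep hId hInt k p e l,
          Finset.mul_sum]
        push_cast
        refine Finset.sum_congr rfl fun d _ => by ring
    _ = ∑ d ∈ Finset.range (p+1), ∑ l ∈ posTuples k (q - e),
          ((q.choose e : ℕ) : ℝ) * ((p.choose d : ℕ) : ℝ) *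
            (((Nat.multinomial Finset.univ l : ℕ) : ℝ) * EE Y k d l) *
              mu Y₀ ((p - d) + e) := Finset.sum_comm
    _ = ∑ d ∈ Finset.range (p+1),
          ((q.choose e : ℕ) : ℝ) * ((p.choose d : ℕ) : ℝ) * cc Y k d (q - e) *
            mu Y₀ ((p - d) + e) := by
        refine Finset.sum_congr rfl fun d _ => ?_
        rw [cc, Finset.mul_sum, Finset.sum_mul]

end Analytic

/-! ### Power series layer -/

section Series

variable [IsProbabilityMeasure (volume : Measure Ω)]
variable (Y : ℕ → Ω → ℝ) (Y₀ : Ω → ℝ) (r : ℕ)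

/-- double coefficient extraction -/
def dcf (Z : PowerSeries (PowerSeries ℝ)) (p q : ℕ) : ℝ :=
  PowerSeries.coeff (R := ℝ) q (PowerSeries.coeff (R := PowerSeries ℝ) p Z)

/-- `g(t+s)` -/
def gg2 : PowerSeries (PowerSeries ℝ) :=
  PowerSeries.mk fun p => PowerSeries.mk fun q =>
    mu Y₀ (p + q) / ((p.factorial : ℝ) * (q.factorial : ℝ))

/-- `g(t)` (one variable) -/
def gg1 : PowerSeries ℝ := PowerSeries.mk fun p => mu Y₀ p / (p.factorial : ℝ)

/-- `e^{rt}` (one variable) -/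
def ertl : PowerSeries ℝ := PowerSeries.mk fun p => (r : ℝ) ^ p / (p.factorial : ℝ)

/-- embedding of `t`-series into `(t,s)`-series -/
def emb : PowerSeries ℝ →+* PowerSeries (PowerSeries ℝ) :=
  PowerSeries.map (PowerSeries.C (R := ℝ))

/-- `e^{rs}` -/
def ers2 (r : ℕ) : PowerSeries (PowerSeries ℝ) :=
  PowerSeries.C (R := PowerSeries ℝ) (PowerSeries.mk fun q => (r : ℝ) ^ q / (q.factorial : ℝ))

/-- `e^{r(t+s)}` -/
def ert2 (r : ℕ) : PowerSeries (PowerSeries ℝ) :=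
  PowerSeries.mk fun p => PowerSeries.mk fun q =>
    (r : ℝ) ^ (p + q) / ((p.factorial : ℝ) * (q.factorial : ℝ))

lemma dcf_mk (f : ℕ → PowerSeries ℝ) (p q : ℕ) :
    dcf (PowerSeries.mk f) p q = PowerSeries.coeff (R := ℝ) q (f p) := by
  rw [dcf, PowerSeries.coeff_mk]

lemma dcf_mul (Z W : PowerSeries (PowerSeries ℝ)) (p q : ℕ) :
    dcf (Z * W) p q
      = ∑ a ∈ Finset.range (p+1), ∑ b ∈ Finset.range (q+1),
          dcf Z a b * dcf W (p - a) (q - b) := by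
  rw [dcf, PowerSeries.coeff_mul, map_sum, Finset.Nat.sum_antidiagonal_eq_sum_range_succ_mk]
  refine Finset.sum_congr rfl fun a _ => ?_
  rw [PowerSeries.coeff_mul, Finset.Nat.sum_antidiagonal_eq_sum_range_succ_mk]
  rfl

lemma dcf_one (p q : ℕ) :
    dcf (1 : PowerSeries (PowerSeries ℝ)) p q = if p = 0 ∧ q = 0 then 1 else 0 := by
  rw [dcf, PowerSeries.coeff_one]
  by_cases hp : p = 0
  · simp [hp, PowerSeries.coeff_one]
  · simp [hp]

lemma dcf_emb (Z : PowerSeries ℝ) (p q : ℕ) :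
    dcf (emb Z) p q = if q = 0 then PowerSeries.coeff (R := ℝ) p Z else 0 := by
  rw [dcf, emb, PowerSeries.coeff_map, PowerSeries.coeff_C]

lemma dcf_mul_natCast (Z : PowerSeries (PowerSeries ℝ)) (c : ℕ) (p q : ℕ) :
    dcf (Z * (c : PowerSeries (PowerSeries ℝ))) p q = dcf Z p q * c := by
  rw [show ((c : ℕ) : PowerSeries (PowerSeries ℝ))
      = PowerSeries.C (R := PowerSeries ℝ) ((c : ℕ) : PowerSeries ℝ) from (map_natCast _ c).symm]
  rw [dcf, PowerSeries.coeff_mul_C]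
  rw [show ((c : ℕ) : PowerSeries ℝ) = PowerSeries.C (R := ℝ) ((c : ℕ) : ℝ) from (map_natCast _ c).symm]
  rw [PowerSeries.coeff_mul_C]
  rfl

lemma dcf_mul_emb (Z : PowerSeries (PowerSeries ℝ)) (Q : PowerSeries ℝ) (p q : ℕ) :
    dcf (Z * emb Q) p q
      = ∑ a ∈ Finset.range (p+1), dcf Z a q * PowerSeries.coeff (R := ℝ) (p - a) Q := by
  rw [dcf, PowerSeries.coeff_mul, map_sum, Finset.Nat.sum_antidiagonal_eq_sum_range_succ_mk]
  refine Finset.sum_congr rfl fun a _ => ?_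
  rw [emb, PowerSeries.coeff_map, PowerSeries.coeff_mul_C]
  rfl

lemma dcf_ers2_mul (Z : PowerSeries (PowerSeries ℝ)) (p q : ℕ) :
    dcf (ers2 r * Z) p q
      = ∑ b ∈ Finset.range (q+1), ((r : ℝ) ^ b / (b.factorial : ℝ)) * dcf Z p (q - b) := by
  rw [dcf, ers2, PowerSeries.coeff_C_mul, PowerSeries.coeff_mul,
    Finset.Nat.sum_antidiagonal_eq_sum_range_succ_mk]
  refine Finset.sum_congr rfl fun b _ => ?_
  rw [PowerSeries.coeff_mk]
  rfl

lemma dcf_ert2 (p q : ℕ) :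
    dcf (ert2 r) p q = (r : ℝ) ^ (p + q) / ((p.factorial : ℝ) * (q.factorial : ℝ)) := by
  rw [ert2, dcf_mk, PowerSeries.coeff_mk]

lemma dcf_gg2 (p q : ℕ) :
    dcf (gg2 Y₀) p q = mu Y₀ (p + q) / ((p.factorial : ℝ) * (q.factorial : ℝ)) := by
  rw [gg2, dcf_mk, PowerSeries.coeff_mk]

/-- restriction `s = 0` -/
def res : PowerSeries (PowerSeries ℝ) →+* PowerSeries ℝ :=
  PowerSeries.map (PowerSeries.constantCoeff (R := ℝ))

lemma coeff_res (Z : PowerSeries (PowerSeries ℝ)) (p : ℕ) :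
    PowerSeries.coeff (R := ℝ) p (res Z) = dcf Z p 0 := by
  rw [res, PowerSeries.coeff_map, dcf, ← PowerSeries.coeff_zero_eq_constantCoeff]

lemma res_ert2 : res (ert2 r) = ertl r := by
  ext p
  rw [coeff_res, dcf_ert2, ertl, PowerSeries.coeff_mk]
  simp

lemma res_gg2 : res (gg2 Y₀) = gg1 Y₀ := by
  ext p
  rw [coeff_res, dcf_gg2, gg1, PowerSeries.coeff_mk]
  simp

variable (hMeas : ∀ i, Measurable (Y i))
  (hIndep : iIndepFun Y volume)
  (hId : ∀ i, IdentDistrib (Y i) Y₀ volume volume)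
  (hInt : ∀ m : ℕ, Integrable fun ω => (Y₀ ω) ^ m)

lemma neg_one_parity {b a : ℕ} (h : b ≤ a) : ((-1 : ℝ)) ^ (b + a) = (-1 : ℝ) ^ (a - b) := by
  rw [show b + a = (a - b) + 2 * b by omega, pow_add, pow_mul]
  simp

include hMeas hIndep hId hInt in
lemma dcf_ert2_gg2_pow (j : ℕ) : ∀ p q, dcf (ert2 r * (gg2 Y₀) ^ j) p q
    = Mm Y r (p + q) j / ((p.factorial : ℝ) * (q.factorial : ℝ)) := by
  induction j with
  | zero =>
    intro p q
    rw [pow_zero, mul_one, dcf_ert2, Mm_zero]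
  | succ j ih =>
    intro p q
    rw [pow_succ, ← mul_assoc, dcf_mul, Mm_succ Y Y₀ r hMeas hIndep hId hInt j p q,
      Finset.sum_div]
    refine Finset.sum_congr rfl fun a ha => ?_
    rw [Finset.sum_div]
    refine Finset.sum_congr rfl fun b hb => ?_
    rw [ih a b, dcf_gg2]
    rw [Finset.mem_range] at ha hb
    have h1 : a ≤ p := by omega
    have h2 : b ≤ q := by omega
    rw [cast_choose_eq p a h1, cast_choose_eq q b h2]
    have n1 : (a.factorial : ℝ) ≠ 0 := Nat.cast_ne_zero.mpr a.factorial_ne_zero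
    have n2 : (b.factorial : ℝ) ≠ 0 := Nat.cast_ne_zero.mpr b.factorial_ne_zero
    have n3 : ((p - a).factorial : ℝ) ≠ 0 := Nat.cast_ne_zero.mpr (p - a).factorial_ne_zero
    have n4 : ((q - b).factorial : ℝ) ≠ 0 := Nat.cast_ne_zero.mpr (q - b).factorial_ne_zero
    have n5 : (p.factorial : ℝ) ≠ 0 := Nat.cast_ne_zero.mpr p.factorial_ne_zero
    have n6 : (q.factorial : ℝ) ≠ 0 := Nat.cast_ne_zero.mpr q.factorial_ne_zero
    field_simp

lemma posTuples_zero_zero : posTuples 0 0 = {(fun i => i.elim0 : Fin 0 → ℕ)} := by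
  decide

lemma posTuples_zero_succ (q : ℕ) : posTuples 0 (q + 1) = ∅ := by
  ext l
  simp only [posTuples, Finset.mem_filter, Finset.Nat.mem_antidiagonalTuple,
    Finset.notMem_empty, iff_false, not_and]
  intro h
  simp at h

lemma cc_zero (p q : ℕ) : cc Y 0 p q = if p = 0 ∧ q = 0 then 1 else 0 := by
  match q with
  | 0 =>
    rw [cc, posTuples_zero_zero, Finset.sum_singleton, EE_zero]
    have : Nat.multinomial (Finset.univ : Finset (Fin 0)) (fun i => i.elim0) = 1 := by
      simp [Nat.multinomial]
    rw [this]
    by_cases hp : p = 0 <;> simp [hp]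
  | (q + 1) =>
    rw [cc, posTuples_zero_succ, Finset.sum_empty]
    simp

lemma cc_lt (k p j : ℕ) (h : j < k) : cc Y k p j = 0 := by
  rw [cc, posTuples_eq_empty h, Finset.sum_empty]

lemma dcf_gsub (a b : ℕ) :
    dcf (gg2 Y₀ - emb (gg1 Y₀)) a b
      = if 1 ≤ b then mu Y₀ (a + b) / ((a.factorial : ℝ) * (b.factorial : ℝ)) else 0 := by
  have hsub : dcf (gg2 Y₀ - emb (gg1 Y₀)) a b = dcf (gg2 Y₀) a b - dcf (emb (gg1 Y₀)) a b := by
    rw [dcf, dcf, dcf, map_sub, map_sub]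
  rw [hsub, dcf_gg2, dcf_emb, gg1, PowerSeries.coeff_mk]
  match b with
  | 0 => simp
  | (b + 1) => simp

lemma filter_one_le (q : ℕ) :
    (Finset.range (q+1)).filter (fun e => 1 ≤ e) = Finset.Icc 1 q := by
  ext e
  simp only [Finset.mem_filter, Finset.mem_range, Finset.mem_Icc]
  omega

include hMeas hIndep hId hInt in
lemma dcf_gsub_pow (k : ℕ) : ∀ p q, dcf ((gg2 Y₀ - emb (gg1 Y₀)) ^ k) p q
    = cc Y k p q / ((p.factorial : ℝ) * (q.factorial : ℝ)) := by
  induction k with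
  | zero =>
    intro p q
    rw [pow_zero, dcf_one, cc_zero]
    by_cases hp : p = 0 <;> by_cases hq : q = 0 <;> simp [hp, hq]
  | succ k ih =>
    intro p q
    rw [pow_succ, dcf_mul, cc_succ Y Y₀ hMeas hIndep hId hInt k p q]
    calc ∑ a ∈ Finset.range (p+1), ∑ b ∈ Finset.range (q+1),
          dcf ((gg2 Y₀ - emb (gg1 Y₀)) ^ k) a b * dcf (gg2 Y₀ - emb (gg1 Y₀)) (p-a) (q-b)
        = ∑ a ∈ Finset.range (p+1), ∑ e ∈ Finset.Icc 1 q,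
            (cc Y k a (q-e) / ((a.factorial : ℝ) * ((q-e).factorial : ℝ))) *
              (mu Y₀ ((p-a) + e) / (((p-a).factorial : ℝ) * (e.factorial : ℝ))) := by
          refine Finset.sum_congr rfl fun a _ => ?_
          rw [← Finset.sum_range_reflect]
          simp only [Nat.add_sub_cancel]
          rw [← filter_one_le q, Finset.sum_filter]
          refine Finset.sum_congr rfl fun e he => ?_
          rw [Finset.mem_range] at he
          have h1 : q - (q - e) = e := by omega
          rw [ih, dcf_gsub, h1]
          by_cases h2 : 1 ≤ e <;> simp [h2]
      _ = ∑ e ∈ Finset.Icc 1 q, ∑ a ∈ Finset.range (p+1),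
            (cc Y k a (q-e) / ((a.factorial : ℝ) * ((q-e).factorial : ℝ))) *
              (mu Y₀ ((p-a) + e) / (((p-a).factorial : ℝ) * (e.factorial : ℝ))) :=
          Finset.sum_comm
      _ = (∑ e ∈ Finset.Icc 1 q, ∑ d ∈ Finset.range (p+1),
            ((q.choose e : ℕ) : ℝ) * ((p.choose d : ℕ) : ℝ) * cc Y k d (q - e) *
              mu Y₀ ((p - d) + e)) / ((p.factorial : ℝ) * (q.factorial : ℝ)) := by
          rw [Finset.sum_div]
          refine Finset.sum_congr rfl fun e he => ?_
          rw [Finset.sum_div]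
          refine Finset.sum_congr rfl fun a ha => ?_
          rw [Finset.mem_range] at ha
          rw [Finset.mem_Icc] at he
          have h1 : a ≤ p := by omega
          have h2 : e ≤ q := he.2
          rw [cast_choose_eq p a h1, cast_choose_eq q e h2]
          have n1 : (a.factorial : ℝ) ≠ 0 := Nat.cast_ne_zero.mpr a.factorial_ne_zero
          have n2 : (e.factorial : ℝ) ≠ 0 := Nat.cast_ne_zero.mpr e.factorial_ne_zero
          have n3 : ((p - a).factorial : ℝ) ≠ 0 := Nat.cast_ne_zero.mpr (p - a).factorial_ne_zero
          have n4 : ((q - e).factorial : ℝ) ≠ 0 := Nat.cast_ne_zero.mpr (q - e).factorial_ne_zero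
          have n5 : (p.factorial : ℝ) ≠ 0 := Nat.cast_ne_zero.mpr p.factorial_ne_zero
          have n6 : (q.factorial : ℝ) ≠ 0 := Nat.cast_ne_zero.mpr q.factorial_ne_zero
          field_simp

/-- scalar embedding -/
def CC : ℝ →+* PowerSeries (PowerSeries ℝ) :=
  (PowerSeries.C (R := PowerSeries ℝ)).comp (PowerSeries.C (R := ℝ))

lemma dcf_CC_mul (x : ℝ) (Z : PowerSeries (PowerSeries ℝ)) (p q : ℕ) :
    dcf (CC x * Z) p q = x * dcf Z p q := by
  rw [CC, dcf, RingHom.comp_apply, PowerSeries.coeff_C_mul, PowerSeries.coeff_C_mul]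
  rfl

include hMeas hIndep hId hInt in
lemma coeff_ertl_gg1_pow (j p : ℕ) :
    PowerSeries.coeff (R := ℝ) p (ertl r * (gg1 Y₀) ^ j) = Mm Y r p j / (p.factorial : ℝ) := by
  have h : res (ert2 r * (gg2 Y₀) ^ j) = ertl r * (gg1 Y₀) ^ j := by
    rw [map_mul, map_pow, res_ert2, res_gg2]
  rw [← h, coeff_res, dcf_ert2_gg2_pow Y Y₀ r hMeas hIndep hId hInt j p 0]
  simp

include hMeas hIndep hId hInt in
lemma coeff_ertl_gg1_sub_pow (a p : ℕ) :
    PowerSeries.coeff (R := ℝ) p (ertl r * (gg1 Y₀ - 1) ^ a)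
      = (∑ b ∈ Finset.range (a+1),
          ((a.choose b : ℕ) : ℝ) * (-1 : ℝ) ^ (a - b) * Mm Y r p b) / (p.factorial : ℝ) := by
  have hexp : ertl r * (gg1 Y₀ - 1) ^ a
      = ∑ b ∈ Finset.range (a+1),
          PowerSeries.C (R := ℝ) ((-1 : ℝ) ^ (b + a) * ((a.choose b : ℕ) : ℝ)) *
            (ertl r * (gg1 Y₀) ^ b) := by
    rw [sub_pow, Finset.mul_sum]
    refine Finset.sum_congr rfl fun b _ => ?_
    rw [map_mul, map_pow, map_neg, map_one, map_natCast]
    push_cast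
    ring
  rw [hexp, map_sum, Finset.sum_div]
  refine Finset.sum_congr rfl fun b hb => ?_
  rw [Finset.mem_range] at hb
  rw [PowerSeries.coeff_C_mul, coeff_ertl_gg1_pow Y Y₀ r hMeas hIndep hId hInt b p,
    neg_one_parity (show b ≤ a by omega)]
  ring

lemma mu_zero : mu Y₀ 0 = 1 := by
  rw [mu]
  simp

lemma coeff_ertl_vanish (a p : ℕ) (h : p < a) :
    PowerSeries.coeff (R := ℝ) p (ertl r * (gg1 Y₀ - 1) ^ a) = 0 := by
  have hX : (PowerSeries.X : PowerSeries ℝ) ∣ (gg1 Y₀ - 1) := by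
    rw [PowerSeries.X_dvd_iff, map_sub, map_one, ← PowerSeries.coeff_zero_eq_constantCoeff]
    rw [gg1, PowerSeries.coeff_mk, mu_zero]
    simp
  have hXa : (PowerSeries.X : PowerSeries ℝ) ^ a ∣ ertl r * (gg1 Y₀ - 1) ^ a :=
    Dvd.dvd.mul_left (pow_dvd_pow_of_dvd hX a) _
  exact PowerSeries.X_pow_dvd_iff.mp hXa p h

lemma ert2_factor : ert2 r = ers2 r * emb (ertl r) := by
  have h : ∀ p q, dcf (ert2 r) p q = dcf (ers2 r * emb (ertl r)) p q := by
    intro p q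
    rw [dcf_ert2, dcf, ers2, PowerSeries.coeff_C_mul, emb, PowerSeries.coeff_map,
      PowerSeries.coeff_mul_C, PowerSeries.coeff_mk, ertl, PowerSeries.coeff_mk, pow_add]
    field_simp
  ext p q
  exact h p q

lemma ak_expand (K : ℕ) :
    ert2 r * (gg2 Y₀ - 1) ^ K
      = ∑ k ∈ Finset.range (K+1),
          (ers2 r * (gg2 Y₀ - emb (gg1 Y₀)) ^ k) * emb (ertl r * (gg1 Y₀ - 1) ^ (K - k)) *
            ((K.choose k : ℕ) : PowerSeries (PowerSeries ℝ)) := by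
  have h2 : gg2 Y₀ - 1 = (gg2 Y₀ - emb (gg1 Y₀)) + (emb (gg1 Y₀) - 1) := by ring
  rw [h2, add_pow, Finset.mul_sum]
  refine Finset.sum_congr rfl fun k _ => ?_
  rw [ert2_factor]
  have h3 : emb (gg1 Y₀) - 1 = emb (gg1 Y₀ - 1) := by rw [map_sub, map_one]
  rw [h3, ← map_pow, map_mul emb]
  ring

include hMeas hIndep hId hInt in
lemma dcf_lhs (K p q : ℕ) :
    dcf (ert2 r * (gg2 Y₀ - 1) ^ K) p q
      = (∑ j ∈ Finset.range (K+1),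
          ((K.choose j : ℕ) : ℝ) * (-1 : ℝ) ^ (K - j) * Mm Y r (p + q) j) /
            ((p.factorial : ℝ) * (q.factorial : ℝ)) := by
  have hexp : ert2 r * (gg2 Y₀ - 1) ^ K
      = ∑ j ∈ Finset.range (K+1),
          CC ((-1 : ℝ) ^ (j + K) * ((K.choose j : ℕ) : ℝ)) * (ert2 r * (gg2 Y₀) ^ j) := by
    rw [sub_pow, Finset.mul_sum]
    refine Finset.sum_congr rfl fun j _ => ?_
    rw [map_mul, map_pow, map_neg, map_one, map_natCast]
    push_cast
    ring
  have hsum : dcf (∑ j ∈ Finset.range (K+1),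
      CC ((-1 : ℝ) ^ (j + K) * ((K.choose j : ℕ) : ℝ)) * (ert2 r * (gg2 Y₀) ^ j)) p q
      = ∑ j ∈ Finset.range (K+1),
          dcf (CC ((-1 : ℝ) ^ (j + K) * ((K.choose j : ℕ) : ℝ)) * (ert2 r * (gg2 Y₀) ^ j)) p q := by
    rw [dcf, map_sum, map_sum]
    rfl
  rw [hexp, hsum, Finset.sum_div]
  refine Finset.sum_congr rfl fun j hj => ?_
  rw [Finset.mem_range] at hj
  rw [dcf_CC_mul, dcf_ert2_gg2_pow Y Y₀ r hMeas hIndep hId hInt j p q,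
    neg_one_parity (show j ≤ K by omega)]
  ring

lemma dcf_sum {α : Type*} (s : Finset α) (Z : α → PowerSeries (PowerSeries ℝ)) (p q : ℕ) :
    dcf (∑ t ∈ s, Z t) p q = ∑ t ∈ s, dcf (Z t) p q := by
  rw [dcf, map_sum, map_sum]
  rfl

include hMeas hIndep hId hInt in
lemma wform (k i M : ℕ) :
    dcf (ers2 r * (gg2 Y₀ - emb (gg1 Y₀)) ^ k) i M
      = (∑ j ∈ Finset.Icc k M, ∑ l ∈ posTuples k j,
          ((M.choose j : ℕ) : ℝ) * ((Nat.multinomial Finset.univ l : ℕ) : ℝ) *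
            (r : ℝ) ^ (M - j) * EE Y k i l) /
        ((i.factorial : ℝ) * (M.factorial : ℝ)) := by
  rw [dcf_ers2_mul]
  calc ∑ b ∈ Finset.range (M+1),
        ((r : ℝ) ^ b / (b.factorial : ℝ)) * dcf ((gg2 Y₀ - emb (gg1 Y₀)) ^ k) i (M - b)
      = ∑ b ∈ Finset.range (M+1),
          (((M.choose (M - b) : ℕ) : ℝ) * (r : ℝ) ^ (M - (M - b)) * cc Y k i (M - b)) /
            ((i.factorial : ℝ) * (M.factorial : ℝ)) := by
        refine Finset.sum_congr rfl fun b hb => ?_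
        rw [Finset.mem_range] at hb
        have hb' : b ≤ M := by omega
        rw [dcf_gsub_pow Y Y₀ hMeas hIndep hId hInt k i (M - b), Nat.choose_symm hb',
          show M - (M - b) = b by omega, cast_choose_eq M b hb']
        have n1 : (b.factorial : ℝ) ≠ 0 := Nat.cast_ne_zero.mpr b.factorial_ne_zero
        have n2 : ((M - b).factorial : ℝ) ≠ 0 := Nat.cast_ne_zero.mpr (M - b).factorial_ne_zero
        have n3 : (i.factorial : ℝ) ≠ 0 := Nat.cast_ne_zero.mpr i.factorial_ne_zero
        have n4 : (M.factorial : ℝ) ≠ 0 := Nat.cast_ne_zero.mpr M.factorial_ne_zero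
        field_simp
    _ = ∑ b ∈ Finset.range (M+1),
          (((M.choose b : ℕ) : ℝ) * (r : ℝ) ^ (M - b) * cc Y k i b) /
            ((i.factorial : ℝ) * (M.factorial : ℝ)) := by
        rw [← Finset.sum_range_reflect]
        refine Finset.sum_congr rfl fun b hb => ?_
        rw [Finset.mem_range] at hb
        rw [show M + 1 - 1 - b = M - b by omega, show M - (M - b) = b by omega]
    _ = (∑ j ∈ Finset.range (M+1),
          ((M.choose j : ℕ) : ℝ) * (r : ℝ) ^ (M - j) * cc Y k i j) /
            ((i.factorial : ℝ) * (M.factorial : ℝ)) := by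
        rw [Finset.sum_div]
    _ = (∑ j ∈ Finset.Icc k M,
          ((M.choose j : ℕ) : ℝ) * (r : ℝ) ^ (M - j) * cc Y k i j) /
            ((i.factorial : ℝ) * (M.factorial : ℝ)) := by
        congr 1
        refine (Finset.sum_subset ?_ ?_).symm
        · intro j hj
          rw [Finset.mem_Icc] at hj
          rw [Finset.mem_range]
          omega
        · intro j hj1 hj2
          rw [Finset.mem_range] at hj1
          rw [Finset.mem_Icc] at hj2
          have : j < k := by omega
          rw [cc_lt Y k i j this]
          ring
    _ = (∑ j ∈ Finset.Icc k M, ∑ l ∈ posTuples k j,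
          ((M.choose j : ℕ) : ℝ) * ((Nat.multinomial Finset.univ l : ℕ) : ℝ) *
            (r : ℝ) ^ (M - j) * EE Y k i l) /
        ((i.factorial : ℝ) * (M.factorial : ℝ)) := by
        congr 1
        refine Finset.sum_congr rfl fun j _ => ?_
        rw [cc, Finset.mul_sum]
        refine Finset.sum_congr rfl fun l _ => ?_
        ring

include hMeas hIndep hId hInt in
lemma sform (a t : ℕ) :
    PowerSeries.coeff (R := ℝ) t (ertl r * (gg1 Y₀ - 1) ^ a)
      = (a.factorial : ℝ) * probRStirling Y r t a / (t.factorial : ℝ) := by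
  rw [coeff_ertl_gg1_sub_pow Y Y₀ r hMeas hIndep hId hInt a t, probRStirling]
  have n1 : (a.factorial : ℝ) ≠ 0 := Nat.cast_ne_zero.mpr a.factorial_ne_zero
  rw [← mul_assoc, mul_inv_cancel₀ n1, one_mul]
  rfl

include hMeas hIndep hId hInt in
lemma svanish (a t : ℕ) (h : t < a) : probRStirling Y r t a = 0 := by
  have h1 := coeff_ertl_vanish Y₀ r a t h
  rw [sform Y Y₀ r hMeas hIndep hId hInt a t] at h1
  have n1 : (a.factorial : ℝ) ≠ 0 := Nat.cast_ne_zero.mpr a.factorial_ne_zero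
  have n2 : (t.factorial : ℝ) ≠ 0 := Nat.cast_ne_zero.mpr t.factorial_ne_zero
  field_simp at h1
  exact (mul_eq_zero.mp (h1.trans (mul_zero _))).resolve_left n1

include hMeas hIndep hId hInt in
lemma stform (M N K : ℕ) :
    probRStirling Y r (M + N) K
      = ((N.factorial : ℝ) * (M.factorial : ℝ) / (K.factorial : ℝ)) *
          dcf (ert2 r * (gg2 Y₀ - 1) ^ K) N M := by
  rw [dcf_lhs Y Y₀ r hMeas hIndep hId hInt K N M, probRStirling]
  have key : ∀ j, Mm Y r (N + M) j = ∫ ω, (S Y j ω + (r : ℝ)) ^ (M + N) := by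
    intro j
    rw [Nat.add_comm N M]
    rfl
  have n1 : (N.factorial : ℝ) ≠ 0 := Nat.cast_ne_zero.mpr N.factorial_ne_zero
  have n2 : (M.factorial : ℝ) ≠ 0 := Nat.cast_ne_zero.mpr M.factorial_ne_zero
  rw [Finset.sum_congr rfl fun j _ => by rw [← key j]]
  field_simp

lemma dcf_decomp (K N M : ℕ) :
    dcf (ert2 r * (gg2 Y₀ - 1) ^ K) N M
      = ∑ k ∈ Finset.range (K+1),
          (∑ i ∈ Finset.range (N+1),
            dcf (ers2 r * (gg2 Y₀ - emb (gg1 Y₀)) ^ k) i M *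
              PowerSeries.coeff (R := ℝ) (N - i) (ertl r * (gg1 Y₀ - 1) ^ (K - k))) *
            ((K.choose k : ℕ) : ℝ) := by
  rw [ak_expand, dcf_sum]
  refine Finset.sum_congr rfl fun k _ => ?_
  rw [dcf_mul_natCast, dcf_mul_emb]

end Series

theorem probBivRBell_recurrence
    [IsProbabilityMeasure (volume : Measure Ω)]
    (Y : ℕ → Ω → ℝ) (Y₀ : Ω → ℝ)
    (hMeas : ∀ i, Measurable (Y i))
    (hIndep : iIndepFun Y volume)
    (hId : ∀ i, IdentDistrib (Y i) Y₀ volume volume)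
    (hInt : ∀ m : ℕ, Integrable fun ω => (Y₀ ω) ^ m)
    (r : ℕ) (hr : 0 < r)
    (m n : ℕ) (x y : ℝ) :
    phiRBiv Y r (m + n) x y =
      ∑ i ∈ Finset.range (n + 1), ∑ k ∈ Finset.range (m + 1),
        (n.choose i : ℝ) * phiRBiv Y r i (x - (k : ℝ)) y *
          (fallFac x k * y ^ k / (k.factorial : ℝ)) *
          ∑ j ∈ Finset.Icc k m, ∑ l ∈ posTuples k j,
            (m.choose j : ℝ) * (Nat.multinomial Finset.univ l : ℝ) * (r : ℝ) ^ (m - j) *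
              ∫ ω, (S Y k ω) ^ (n - i) * ∏ i' : Fin k, (Y i' ω) ^ (l i') := by
  have key := fun k i =>
    wform Y Y₀ r hMeas hIndep hId hInt k i m
  -- notation for the inner double sum
  set Wt : ℕ → ℕ → ℝ := fun k i => ∑ j ∈ Finset.Icc k m, ∑ l ∈ posTuples k j,
      ((m.choose j : ℕ) : ℝ) * ((Nat.multinomial Finset.univ l : ℕ) : ℝ) *
        (r : ℝ) ^ (m - j) * EE Y k i l with hWt
  calc phiRBiv Y r (m + n) x y
      = ∑ K ∈ Finset.range (m + n + 1),
          probRStirling Y r (m + n) K * fallFac x K * y ^ K := rfl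
    _ = ∑ K ∈ Finset.range (m + n + 1), ∑ k ∈ Finset.range (K + 1),
          ∑ i ∈ Finset.range (n + 1),
            ((n.choose i : ℕ) : ℝ) * Wt k i * probRStirling Y r (n - i) (K - k) *
              (fallFac x k * y ^ k / (k.factorial : ℝ)) *
              (fallFac (x - (k : ℝ)) (K - k) * y ^ (K - k)) := by
        refine Finset.sum_congr rfl fun K hK => ?_
        rw [Finset.mem_range] at hK
        rw [stform Y Y₀ r hMeas hIndep hId hInt m n K,
          dcf_decomp Y₀ r K n m, Finset.mul_sum, Finset.sum_mul, Finset.sum_mul]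
        refine Finset.sum_congr rfl fun k hk => ?_
        rw [Finset.mem_range] at hk
        rw [Finset.sum_mul, Finset.mul_sum, Finset.sum_mul, Finset.sum_mul]
        refine Finset.sum_congr rfl fun i hi => ?_
        rw [Finset.mem_range] at hi
        rw [key k i, sform Y Y₀ r hMeas hIndep hId hInt (K - k) (n - i)]
        have hff := fallFac_add x k (K - k)
        rw [show k + (K - k) = K by omega] at hff
        have hy : y ^ K = y ^ k * y ^ (K - k) := by
          rw [← pow_add]
          congr 1
          omega
        have hcK : ((K.choose k : ℕ) : ℝ)
            = (K.factorial : ℝ) / ((k.factorial : ℝ) * ((K - k).factorial : ℝ)) :=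
          cast_choose_eq K k (by omega)
        have hcn : ((n.choose i : ℕ) : ℝ)
            = (n.factorial : ℝ) / ((i.factorial : ℝ) * ((n - i).factorial : ℝ)) :=
          cast_choose_eq n i (by omega)
        rw [hff, hy, hcK, hcn]
        have n1 : (k.factorial : ℝ) ≠ 0 := Nat.cast_ne_zero.mpr k.factorial_ne_zero
        have n2 : ((K - k).factorial : ℝ) ≠ 0 := Nat.cast_ne_zero.mpr (K - k).factorial_ne_zero
        have n3 : (i.factorial : ℝ) ≠ 0 := Nat.cast_ne_zero.mpr i.factorial_ne_zero
        have n4 : ((n - i).factorial : ℝ) ≠ 0 := Nat.cast_ne_zero.mpr (n - i).factorial_ne_zero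
        have n5 : (K.factorial : ℝ) ≠ 0 := Nat.cast_ne_zero.mpr K.factorial_ne_zero
        have n6 : (n.factorial : ℝ) ≠ 0 := Nat.cast_ne_zero.mpr n.factorial_ne_zero
        have n7 : (m.factorial : ℝ) ≠ 0 := Nat.cast_ne_zero.mpr m.factorial_ne_zero
        field_simp
        ring
    _ = ∑ k ∈ Finset.range (m + n + 1), ∑ a ∈ Finset.range (m + n + 1 - k),
          ∑ i ∈ Finset.range (n + 1),
            ((n.choose i : ℕ) : ℝ) * Wt k i * probRStirling Y r (n - i) ((k + a) - k) *
              (fallFac x k * y ^ k / (k.factorial : ℝ)) *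
              (fallFac (x - (k : ℝ)) ((k + a) - k) * y ^ ((k + a) - k)) :=
        sum_triangle (m + n + 1) _
    _ = ∑ k ∈ Finset.range (m + 1), ∑ a ∈ Finset.range (m + n + 1 - k),
          ∑ i ∈ Finset.range (n + 1),
            ((n.choose i : ℕ) : ℝ) * Wt k i * probRStirling Y r (n - i) a *
              (fallFac x k * y ^ k / (k.factorial : ℝ)) *
              (fallFac (x - (k : ℝ)) a * y ^ a) := by
        simp only [Nat.add_sub_cancel_left]
        refine (Finset.sum_subset ?_ ?_).symm
        · intro k hk
          rw [Finset.mem_range] at hk ⊢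
          omega
        · intro k hk1 hk2
          rw [Finset.mem_range] at hk1 hk2
          refine Finset.sum_eq_zero fun a _ => Finset.sum_eq_zero fun i _ => ?_
          have hWt0 : Wt k i = 0 := by
            rw [hWt]
            simp only
            rw [Finset.Icc_eq_empty (by omega), Finset.sum_empty]
          rw [hWt0]
          ring
    _ = ∑ k ∈ Finset.range (m + 1), ∑ i ∈ Finset.range (n + 1),
          ((n.choose i : ℕ) : ℝ) * Wt k i *
            (fallFac x k * y ^ k / (k.factorial : ℝ)) *
            phiRBiv Y r (n - i) (x - (k : ℝ)) y := by
        refine Finset.sum_congr rfl fun k hk => ?_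
        rw [Finset.mem_range] at hk
        rw [Finset.sum_comm]
        refine Finset.sum_congr rfl fun i hi => ?_
        rw [Finset.mem_range] at hi
        calc ∑ a ∈ Finset.range (m + n + 1 - k),
              ((n.choose i : ℕ) : ℝ) * Wt k i * probRStirling Y r (n - i) a *
                (fallFac x k * y ^ k / (k.factorial : ℝ)) *
                (fallFac (x - (k : ℝ)) a * y ^ a)
            = ∑ a ∈ Finset.range (m + n + 1 - k),
                (((n.choose i : ℕ) : ℝ) * Wt k i *
                  (fallFac x k * y ^ k / (k.factorial : ℝ))) *
                  (probRStirling Y r (n - i) a * fallFac (x - (k : ℝ)) a * y ^ a) := by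
              refine Finset.sum_congr rfl fun a _ => by ring
          _ = (((n.choose i : ℕ) : ℝ) * Wt k i *
                  (fallFac x k * y ^ k / (k.factorial : ℝ))) *
                ∑ a ∈ Finset.range (m + n + 1 - k),
                  (probRStirling Y r (n - i) a * fallFac (x - (k : ℝ)) a * y ^ a) := by
              exact (Finset.mul_sum _ _ _).symm
          _ = (((n.choose i : ℕ) : ℝ) * Wt k i *
                  (fallFac x k * y ^ k / (k.factorial : ℝ))) *
                ∑ a ∈ Finset.range ((n - i) + 1),
                  (probRStirling Y r (n - i) a * fallFac (x - (k : ℝ)) a * y ^ a) := by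
              congr 1
              refine (Finset.sum_subset ?_ ?_).symm
              · intro a ha
                rw [Finset.mem_range] at ha ⊢
                omega
              · intro a ha1 ha2
                rw [Finset.mem_range] at ha1 ha2
                rw [svanish Y Y₀ r hMeas hIndep hId hInt a (n - i) (by omega)]
                ring
          _ = ((n.choose i : ℕ) : ℝ) * Wt k i *
                (fallFac x k * y ^ k / (k.factorial : ℝ)) *
                phiRBiv Y r (n - i) (x - (k : ℝ)) y := by
              rw [phiRBiv]
    _ = ∑ k ∈ Finset.range (m + 1), ∑ i ∈ Finset.range (n + 1),
          ((n.choose i : ℕ) : ℝ) * phiRBiv Y r i (x - (k : ℝ)) y *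
            (fallFac x k * y ^ k / (k.factorial : ℝ)) * Wt k (n - i) := by
        refine Finset.sum_congr rfl fun k _ => ?_
        have hrefl := Finset.sum_range_reflect
          (fun i => ((n.choose i : ℕ) : ℝ) * phiRBiv Y r i (x - (k : ℝ)) y *
            (fallFac x k * y ^ k / (k.factorial : ℝ)) * Wt k (n - i)) (n + 1)
        rw [← hrefl]
        refine Finset.sum_congr rfl fun i hi => ?_
        rw [Finset.mem_range] at hi
        rw [show n + 1 - 1 - i = n - i by omega, show n - (n - i) = i by omega,
          Nat.choose_symm (by omega : i ≤ n)]
        ring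
    _ = ∑ i ∈ Finset.range (n + 1), ∑ k ∈ Finset.range (m + 1),
          ((n.choose i : ℕ) : ℝ) * phiRBiv Y r i (x - (k : ℝ)) y *
            (fallFac x k * y ^ k / (k.factorial : ℝ)) * Wt k (n - i) :=
        Finset.sum_comm
    _ = ∑ i ∈ Finset.range (n + 1), ∑ k ∈ Finset.range (m + 1),
        (n.choose i : ℝ) * phiRBiv Y r i (x - (k : ℝ)) y *
          (fallFac x k * y ^ k / (k.factorial : ℝ)) *
          ∑ j ∈ Finset.Icc k m, ∑ l ∈ posTuples k j,
            (m.choose j : ℝ) * (Nat.multinomial Finset.univ l : ℝ) * (r : ℝ) ^ (m - j) *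
              ∫ ω, (S Y k ω) ^ (n - i) * ∏ i' : Fin k, (Y i' ω) ^ (l i') := rfl

end
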